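/- Let G be a simple graph, let φ be a new vertex added to G with neighbor set κ ⊆ V(G), forming graph G'. Then every maximal clique of G' that contains φ is of the form (W ∩ κ) ∪ {φ} for some maximal clique W of G (with the convention that if no maximal clique of G intersects κ, the new maximal clique is {φ}). -/

import Mathlib

/-- The graph `G` extended by a new vertex `none` adjacent exactly to `κ`. -/
def extendGraph {V : Type*} (G : SimpleGraph V) (κ : Set V) : SimpleGraph (Option V) where
  Adj x y :=
    match x, y with
    | some a, some b => G.Adj a b
    | none, some a => a ∈ κ
    | some a, none => a ∈ κ
    | none, none => False
  symm := by
    constructor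
    intro x y h
    cases x <;> cases y <;> simp_all <;> exact h.symm
  loopless := by
    constructor
    intro x
    cases x <;> simp

/-- A maximal clique: a clique not properly contained in any other clique. -/
def IsMaxClique {V : Type*} (G : SimpleGraph V) (s : Set V) : Prop :=
  G.IsClique s ∧ ∀ t : Set V, G.IsClique t → s ⊆ t → s = t

lemma exists_maxClique {V : Type*} (G : SimpleGraph V) (S : Set V)
    (hS : G.IsClique S) : ∃ W, IsMaxClique G W ∧ S ⊆ W := by
  obtain ⟨m, hSm, hm⟩ := zorn_subset_nonempty {t : Set V | G.IsClique t}
    (fun c hc hchain hne => by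
      refine ⟨⋃₀ c, ?_, fun s hs => Set.subset_sUnion_of_mem hs⟩
      intro u hu v hv huv
      obtain ⟨a, ha, hua⟩ := hu
      obtain ⟨b, hb, hvb⟩ := hv
      rcases hchain.total ha hb with h | h
      · exact hc hb (h hua) hvb huv
      · exact hc ha hua (h hvb) huv) S hS
  exact ⟨m, ⟨hm.prop, fun t ht hmt => subset_antisymm hmt (hm.2 ht hmt)⟩, hSm⟩

/-- Every maximal clique of the extended graph containing the new vertex has the
form `(W ∩ κ) ∪ {φ}` for some maximal clique `W` of `G`; if no maximal clique of
`G` meets `κ`, the new maximal clique is `{φ}`. -/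
theorem stmt_4 {V : Type*} [Fintype V] (G : SimpleGraph V) (κ : Set V)
    (C : Set (Option V)) (hC : IsMaxClique (extendGraph G κ) C) (hφ : none ∈ C) :
    (∃ W : Set V, IsMaxClique G W ∧ C = (some '' (W ∩ κ)) ∪ {none}) ∨
      ((∀ W : Set V, IsMaxClique G W → W ∩ κ = ∅) ∧ C = {(none : Option V)}) := by

  left
  obtain ⟨hCcl, hCmax⟩ := hC
  set S : Set V := {a | some a ∈ C} with hSdef
  have hSκ : S ⊆ κ := by
    intro a ha
    have := hCcl ha hφ (by simp)
    exact this
  have hScl : G.IsClique S := by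
    intro a ha b hb hab
    exact hCcl ha hb (by simpa using hab)
  obtain ⟨W, hW, hSW⟩ := exists_maxClique G S hScl
  refine ⟨W, hW, ?_⟩
  have hclique : (extendGraph G κ).IsClique ((some '' (W ∩ κ)) ∪ {none}) := by
    rintro x hx y hy hxy
    rcases hx with ⟨a, ⟨haW, haκ⟩, rfl⟩ | hx
    · rcases hy with ⟨b, ⟨hbW, hbκ⟩, rfl⟩ | hy
      · exact hW.1 haW hbW (by simpa using hxy)
      · simp only [Set.mem_singleton_iff] at hy
        subst hy; exact haκ
    · simp only [Set.mem_singleton_iff] at hx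
      subst hx
      rcases hy with ⟨b, ⟨hbW, hbκ⟩, rfl⟩ | hy
      · exact hbκ
      · simp only [Set.mem_singleton_iff] at hy; subst hy; exact absurd rfl hxy
  apply hCmax _ hclique
  intro x hx
  cases x with
  | none => simp
  | some a =>
      left
      exact ⟨a, ⟨hSW hx, hSκ hx⟩, rfl⟩
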